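/- Let P be a nonzero polynomial with integer coefficients of degree d ≥ 2 and height H. Let α > d and k > 1 be real numbers, and let (a_n)_{n≥1} be a sequence of positive integers with a_n^{α+1} ≤ a_{n+1} < a_n^{kα} for all n ≥ 1. Let θ = ∑_{n=1}^∞ 1/a_n and, for n ≥ 1, let θ_n = ∑_{j=1}^n 1/a_j = p_n/q_n in lowest terms. Then for all sufficiently large n, |P(θ) − P(θ_n)| < H·d·(d+1)/(2·q_n^α). -/

import Mathlib

/-- The height of an integer polynomial: the maximum of the absolute values of its
coefficients. -/
def polyHeight (P : Polynomial ℤ) : ℕ := P.support.sup fun i => (P.coeff i).natAbs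

open Finset Real Polynomial

private lemma den_sum_dvd (f : ℕ → ℚ) (s : Finset ℕ) :
    (∑ j ∈ s, f j).den ∣ ∏ j ∈ s, (f j).den := by
  classical
  induction s using Finset.induction_on with
  | empty => simp
  | insert _ _ hi ih =>
      rw [Finset.sum_insert hi, Finset.prod_insert hi]
      exact (Rat.add_den_dvd _ _).trans (mul_dvd_mul_left _ ih)

private lemma abs_pow_sub_pow_le' (x y : ℝ) (hx : |x| ≤ 1) (hy : |y| ≤ 1) :
    ∀ i : ℕ, |x ^ i - y ^ i| ≤ i * |x - y| := by
  intro i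
  induction i with
  | zero => simp
  | succ i ih =>
      have h1 : x ^ (i+1) - y ^ (i+1) = x ^ i * (x - y) + (x ^ i - y ^ i) * y := by ring
      calc |x ^ (i+1) - y ^ (i+1)| ≤ |x ^ i * (x - y)| + |(x ^ i - y ^ i) * y| := by
            rw [h1]; exact abs_add_le _ _
        _ ≤ 1 * |x - y| + ((i : ℝ) * |x - y|) * 1 := by
            rw [abs_mul, abs_mul]
            gcongr
            · rw [abs_pow]; exact pow_le_one₀ (abs_nonneg x) hx
        _ = ((i+1 : ℕ) : ℝ) * |x - y| := by push_cast; ring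

private lemma coeff_abs_le (P : Polynomial ℤ) (i : ℕ) :
    |((P.coeff i : ℤ) : ℝ)| ≤ (polyHeight P : ℝ) := by
  by_cases h : i ∈ P.support
  · have h1 : (P.coeff i).natAbs ≤ polyHeight P :=
      Finset.le_sup (f := fun i => (P.coeff i).natAbs) h
    calc |((P.coeff i : ℤ) : ℝ)| = (((P.coeff i).natAbs : ℕ) : ℝ) := by
          rw [Nat.cast_natAbs]; simp
      _ ≤ (polyHeight P : ℝ) := by exact_mod_cast h1
  · rw [Polynomial.notMem_support_iff.mp h]
    simp

private lemma poly_bound (P : Polynomial ℤ) (x y : ℝ) (hx : |x| ≤ 1) (hy : |y| ≤ 1) :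
    |(Polynomial.aeval x) P - (Polynomial.aeval y) P| ≤
      (polyHeight P : ℝ) * (((P.natDegree : ℝ) * ((P.natDegree : ℝ) + 1)) / 2) * |x - y| := by
  set d := P.natDegree with hd
  have hx' := Polynomial.aeval_eq_sum_range (R := ℤ) (p := P) x
  have hy' := Polynomial.aeval_eq_sum_range (R := ℤ) (p := P) y
  rw [hx', hy', ← Finset.sum_sub_distrib]
  have hterm : ∀ i, P.coeff i • x ^ i - P.coeff i • y ^ i
      = ((P.coeff i : ℤ) : ℝ) * (x ^ i - y ^ i) := by
    intro i
    rw [zsmul_eq_mul, zsmul_eq_mul]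
    ring
  calc |∑ i ∈ Finset.range (d+1), (P.coeff i • x ^ i - P.coeff i • y ^ i)|
      ≤ ∑ i ∈ Finset.range (d+1), |P.coeff i • x ^ i - P.coeff i • y ^ i| :=
        Finset.abs_sum_le_sum_abs _ _
    _ ≤ ∑ i ∈ Finset.range (d+1), (polyHeight P : ℝ) * ((i : ℝ) * |x - y|) := by
        apply Finset.sum_le_sum
        intro i _
        rw [hterm i, abs_mul]
        exact mul_le_mul (coeff_abs_le P i) (abs_pow_sub_pow_le' x y hx hy i)
          (abs_nonneg _) (Nat.cast_nonneg _)
    _ = (polyHeight P : ℝ) * (∑ i ∈ Finset.range (d+1), (i : ℝ)) * |x - y| := by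
        rw [Finset.mul_sum, Finset.sum_mul]
        exact Finset.sum_congr rfl fun i _ => by ring
    _ = (polyHeight P : ℝ) * (((d : ℝ) * ((d : ℝ) + 1)) / 2) * |x - y| := by
        have h2 : (∑ i ∈ Finset.range (d+1), (i:ℕ)) * 2 = (d+1) * d :=
          Finset.sum_range_id_mul_two (d+1)
        have h3 : (∑ i ∈ Finset.range (d+1), (i : ℝ)) = ((d : ℝ) * ((d : ℝ) + 1)) / 2 := by
          have h4 : ((∑ i ∈ Finset.range (d+1), (i:ℕ) : ℕ) : ℝ) * 2 = ((d:ℝ)+1) * d := by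
            exact_mod_cast congrArg (Nat.cast : ℕ → ℝ) h2
          push_cast at h4
          linarith
        rw [h3]

/-- Let `P ∈ ℤ[X]` be nonzero of degree `d ≥ 2` and height `H`.  Let `α > d`, `k > 1` be
real and `(a_n)_{n≥1}` positive integers with `a_n^{α+1} ≤ a_{n+1} < a_n^{kα}` for all
`n ≥ 1`.  With `θ = ∑_{n=1}^∞ 1/a_n` and `θ_n = p_n/q_n` the `n`-th partial sum in
lowest terms, for all sufficiently large `n` one has
`|P(θ) - P(θ_n)| < H d (d+1) / (2 q_n^α)`. -/
theorem stmt_11 (P : Polynomial ℤ) (hP : P ≠ 0) (d : ℕ) (hd : 2 ≤ d)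
    (hdeg : P.natDegree = d) (H : ℕ) (hH : polyHeight P = H)
    (α k : ℝ) (hα : (d : ℝ) < α) (hk : 1 < k)
    (a : ℕ → ℕ) (ha : ∀ n, 1 ≤ n → 0 < a n)
    (hgrow : ∀ n, 1 ≤ n → (a n : ℝ) ^ (α + 1) ≤ (a (n + 1) : ℝ))
    (hgrow' : ∀ n, 1 ≤ n → (a (n + 1) : ℝ) < (a n : ℝ) ^ (k * α))
    (θ : ℝ) (hθ : HasSum (fun n : ℕ => (1 : ℝ) / (a (n + 1) : ℝ)) θ) :
    ∃ N : ℕ, ∀ n, N ≤ n →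
      |(Polynomial.aeval θ) P -
          (Polynomial.aeval ((∑ j ∈ Finset.Icc 1 n, (1 : ℚ) / (a j : ℚ) : ℚ) : ℝ)) P| <
        (H : ℝ) * d * (d + 1) /
          (2 * (((∑ j ∈ Finset.Icc 1 n, (1 : ℚ) / (a j : ℚ)).den : ℝ)) ^ α) := by
  classical
  set f : ℕ → ℝ := fun m => (1 : ℝ) / (a (m + 1) : ℝ) with hf
  have hsum : Summable f := hθ.summable
  have hα2 : (2 : ℝ) < α := lt_of_le_of_lt (by exact_mod_cast hd) hα
  have hαpos : (0 : ℝ) < α := by linarith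
  have ha1 : ∀ n, 1 ≤ n → (1 : ℝ) ≤ (a n : ℝ) := by
    intro n hn; exact_mod_cast ha n hn
  -- every a n is at least 2
  have ha2 : ∀ n, 1 ≤ n → (2 : ℝ) ≤ (a n : ℝ) := by
    intro n hn
    rcases Nat.lt_or_ge (a n) 2 with h | h
    · exfalso
      have h1 : a n = 1 := by have := ha n hn; omega
      have h2 := hgrow n hn
      have h3 := hgrow' n hn
      rw [h1] at h2 h3
      rw [Nat.cast_one, Real.one_rpow] at h2 h3
      linarith
    · exact_mod_cast h
  have hcube : ∀ n, 1 ≤ n → (a n : ℝ) ^ (3 : ℕ) ≤ (a (n + 1) : ℝ) := by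
    intro n hn
    have h1 : (a n : ℝ) ^ (3 : ℕ) = (a n : ℝ) ^ ((3 : ℕ) : ℝ) := (Real.rpow_natCast _ 3).symm
    rw [h1]
    calc (a n : ℝ) ^ ((3 : ℕ) : ℝ) ≤ (a n : ℝ) ^ (α + 1) :=
          Real.rpow_le_rpow_of_exponent_le (ha1 n hn) (by push_cast; linarith)
      _ ≤ (a (n + 1) : ℝ) := hgrow n hn
  have hfour : ∀ n, 1 ≤ n → 4 * (a n : ℝ) ≤ (a (n + 1) : ℝ) := by
    intro n hn
    nlinarith [hcube n hn, ha2 n hn, sq_nonneg ((a n : ℝ) - 2)]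
  have hA : ∀ m n, 1 ≤ n → (a n : ℝ) * 4 ^ m ≤ (a (n + m) : ℝ) := by
    intro m
    induction m with
    | zero => simp
    | succ m ih =>
        intro n hn
        have h1 := ih n hn
        have h2 := hfour (n + m) (by omega)
        calc (a n : ℝ) * 4 ^ (m + 1) = 4 * ((a n : ℝ) * 4 ^ m) := by ring
          _ ≤ 4 * (a (n + m) : ℝ) := by linarith
          _ ≤ (a (n + m + 1) : ℝ) := h2
  -- tail estimate
  have htail : ∀ n : ℕ, (∑' m : ℕ, f (m + n)) ≤ (4 / 3) * (1 / (a (n + 1) : ℝ)) := by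
    intro n
    have hapos : (0 : ℝ) < (a (n + 1) : ℝ) := by
      have := ha (n + 1) (by omega); exact_mod_cast this
    have hb : ∀ m : ℕ, f (m + n) ≤ (1 / (a (n + 1) : ℝ)) * (1 / 4) ^ m := by
      intro m
      have h1 := hA m (n + 1) (by omega)
      have h2 : n + 1 + m = m + n + 1 := by omega
      rw [h2] at h1
      have h3 : (0 : ℝ) < (a (n + 1) : ℝ) * 4 ^ m := by positivity
      calc f (m + n) = 1 / (a (m + n + 1) : ℝ) := rfl
        _ ≤ 1 / ((a (n + 1) : ℝ) * 4 ^ m) := one_div_le_one_div_of_le h3 h1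
        _ = (1 / (a (n + 1) : ℝ)) * (1 / 4) ^ m := by
            rw [one_div_pow, div_mul_div_comm, one_mul]
    have hs2 : Summable fun m => f (m + n) := (summable_nat_add_iff n).mpr hsum
    have hg : Summable fun m : ℕ => (1 / (a (n + 1) : ℝ)) * (1 / 4) ^ m :=
      (summable_geometric_of_lt_one (by norm_num) (by norm_num)).mul_left _
    calc (∑' m : ℕ, f (m + n)) ≤ ∑' m : ℕ, (1 / (a (n + 1) : ℝ)) * (1 / 4) ^ m :=
          Summable.tsum_le_tsum hb hs2 hg
      _ = (1 / (a (n + 1) : ℝ)) * (1 - (1 / 4 : ℝ))⁻¹ := by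
          rw [tsum_mul_left, tsum_geometric_of_lt_one (by norm_num) (by norm_num)]
      _ = (4 / 3) * (1 / (a (n + 1) : ℝ)) := by norm_num; ring
  -- the cast of the partial sum
  have hS : ∀ n : ℕ, ((∑ j ∈ Finset.Icc 1 n, (1 : ℚ) / (a j : ℚ) : ℚ) : ℝ)
      = ∑ i ∈ Finset.range n, f i := by
    intro n
    push_cast
    rw [show Finset.Icc 1 n = Finset.Ico 1 (n + 1) from (Finset.Ico_add_one_right_eq_Icc 1 n).symm]
    rw [Finset.sum_Ico_eq_sum_range]
    simp only [Nat.add_sub_cancel]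
    exact Finset.sum_congr rfl fun i _ => by rw [add_comm]
  -- key denominator bound
  have hQ : ∀ n, 1 ≤ n →
      2 * ((∏ j ∈ Finset.Icc 1 n, a j : ℕ) : ℝ) ^ α ≤ (a n : ℝ) ^ (α + 1) := by
    intro n hn
    induction n, hn using Nat.le_induction with
    | base =>
        rw [Finset.Icc_self, Finset.prod_singleton]
        rw [Real.rpow_add (by linarith [ha2 1 le_rfl]), Real.rpow_one]
        have h1 := ha2 1 le_rfl
        nlinarith [Real.rpow_nonneg (Nat.cast_nonneg (a 1)) α]
    | succ m hm ih =>
        have hstep : (∏ j ∈ Finset.Icc 1 (m + 1), a j) = (∏ j ∈ Finset.Icc 1 m, a j) * a (m + 1) :=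
          Finset.prod_Icc_succ_top (by omega) _
        have hApos : (0 : ℝ) < (a (m + 1) : ℝ) := by linarith [ha2 (m + 1) (by omega)]
        have hQpos : (0 : ℝ) ≤ ((∏ j ∈ Finset.Icc 1 m, a j : ℕ) : ℝ) := Nat.cast_nonneg _
        rw [hstep, Nat.cast_mul, Real.mul_rpow hQpos (le_of_lt hApos)]
        have hAα : (0 : ℝ) < (a (m + 1) : ℝ) ^ α := Real.rpow_pos_of_pos hApos α
        calc 2 * (((∏ j ∈ Finset.Icc 1 m, a j : ℕ) : ℝ) ^ α * (a (m + 1) : ℝ) ^ α)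
            = (2 * ((∏ j ∈ Finset.Icc 1 m, a j : ℕ) : ℝ) ^ α) * (a (m + 1) : ℝ) ^ α := by ring
          _ ≤ (a m : ℝ) ^ (α + 1) * (a (m + 1) : ℝ) ^ α := by
              exact mul_le_mul_of_nonneg_right ih (le_of_lt hAα)
          _ ≤ (a (m + 1) : ℝ) * (a (m + 1) : ℝ) ^ α := by
              exact mul_le_mul_of_nonneg_right (hgrow m hm) (le_of_lt hAα)
          _ = (a (m + 1) : ℝ) ^ (α + 1) := by
              rw [Real.rpow_add hApos, Real.rpow_one]; ring
  -- denominator divides the product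
  have hdvd : ∀ n : ℕ, (∑ j ∈ Finset.Icc 1 n, (1 : ℚ) / (a j : ℚ)).den ∣
      ∏ j ∈ Finset.Icc 1 n, a j := by
    intro n
    refine (den_sum_dvd _ _).trans (Finset.prod_dvd_prod_of_dvd _ _ ?_)
    intro j hj
    have he : (1 : ℚ) / (a j : ℚ) = Rat.divInt 1 (a j : ℤ) := by
      rw [Rat.divInt_eq_div]; push_cast; ring
    rw [he]
    have h1 := Rat.den_dvd (1 : ℤ) ((a j : ℤ))
    exact_mod_cast h1
  -- positivity facts about the height and degree
  have hH1 : 1 ≤ H := by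
    obtain ⟨i, hi⟩ := (Polynomial.support_nonempty.mpr hP)
    have h1 : 1 ≤ (P.coeff i).natAbs := by
      have := Polynomial.mem_support_iff.mp hi
      omega
    have h2 : (P.coeff i).natAbs ≤ polyHeight P :=
      Finset.le_sup (f := fun i => (P.coeff i).natAbs) hi
    omega
  have hθ0 : 0 ≤ θ := by
    rw [← hθ.tsum_eq]
    exact tsum_nonneg fun m => by positivity
  have hθ1 : θ ≤ 1 := by
    have h1 := htail 0
    have h2 : (∑' m : ℕ, f (m + 0)) = θ := by
      simpa using hθ.tsum_eq
    rw [h2] at h1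
    have h3 : 1 / (a 1 : ℝ) ≤ 1 / 2 :=
      one_div_le_one_div_of_le (by norm_num) (ha2 1 le_rfl)
    linarith
  refine ⟨1, fun n hn => ?_⟩
  set S : ℚ := ∑ j ∈ Finset.Icc 1 n, (1 : ℚ) / (a j : ℚ) with hSdef
  have hSr : ((S : ℚ) : ℝ) = ∑ i ∈ Finset.range n, f i := hS n
  -- bounds on the partial sum and the tail
  have hsplit := hsum.sum_add_tsum_nat_add n
  rw [hθ.tsum_eq] at hsplit
  have htail0 : 0 ≤ ∑' m : ℕ, f (m + n) := tsum_nonneg fun m => by positivity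
  have hSθ : ((S : ℚ) : ℝ) ≤ θ := by rw [hSr]; linarith
  have hS0 : 0 ≤ ((S : ℚ) : ℝ) := by
    rw [hSr]; exact Finset.sum_nonneg fun i _ => by positivity
  -- denominator bound
  have hqprod : (S.den : ℝ) ≤ ((∏ j ∈ Finset.Icc 1 n, a j : ℕ) : ℝ) := by
    have h1 : S.den ≤ ∏ j ∈ Finset.Icc 1 n, a j :=
      Nat.le_of_dvd (Finset.prod_pos fun j hj => ha j (Finset.mem_Icc.mp hj).1) (hdvd n)
    exact_mod_cast h1
  have hq1 : (1 : ℝ) ≤ (S.den : ℝ) := by exact_mod_cast S.pos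
  have hqα : (0 : ℝ) < (S.den : ℝ) ^ α := Real.rpow_pos_of_pos (by linarith) α
  have hkey : 2 * (S.den : ℝ) ^ α ≤ (a (n + 1) : ℝ) := by
    have h1 : (S.den : ℝ) ^ α ≤ ((∏ j ∈ Finset.Icc 1 n, a j : ℕ) : ℝ) ^ α :=
      Real.rpow_le_rpow (Nat.cast_nonneg _) hqprod (le_of_lt hαpos)
    have h2 := hQ n hn
    have h3 := hgrow n hn
    linarith
  -- tail is small
  have hdiff : θ - ((S : ℚ) : ℝ) ≤ (2 / 3) * (1 / (S.den : ℝ) ^ α) := by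
    have h1 := htail n
    have h2 : θ - ((S : ℚ) : ℝ) = ∑' m : ℕ, f (m + n) := by rw [hSr]; linarith
    have h3 : 1 / (a (n + 1) : ℝ) ≤ 1 / (2 * (S.den : ℝ) ^ α) :=
      one_div_le_one_div_of_le (by positivity) hkey
    rw [h2]
    calc (∑' m : ℕ, f (m + n)) ≤ (4 / 3) * (1 / (a (n + 1) : ℝ)) := h1
      _ ≤ (4 / 3) * (1 / (2 * (S.den : ℝ) ^ α)) := by linarith
      _ = (2 / 3) * (1 / (S.den : ℝ) ^ α) := by
          rw [one_div, mul_inv]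
          ring
  -- final assembly
  have habsθ : |θ| ≤ 1 := abs_le.mpr ⟨by linarith, hθ1⟩
  have habsS : |((S : ℚ) : ℝ)| ≤ 1 := abs_le.mpr ⟨by linarith, by linarith⟩
  have hpb := poly_bound P θ ((S : ℚ) : ℝ) habsθ habsS
  rw [hdeg, hH] at hpb
  have habsd : |θ - ((S : ℚ) : ℝ)| ≤ (2 / 3) * (1 / (S.den : ℝ) ^ α) := by
    rw [abs_of_nonneg (by linarith)]
    exact hdiff
  have hHd : (0 : ℝ) < (H : ℝ) * d * (d + 1) := by
    have h1 : (1 : ℝ) ≤ (H : ℝ) := by exact_mod_cast hH1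
    have h2 : (2 : ℝ) ≤ (d : ℝ) := by exact_mod_cast hd
    have h3 : (0 : ℝ) < (H : ℝ) := by linarith
    exact mul_pos (mul_pos h3 (by linarith)) (by linarith)
  calc |(Polynomial.aeval θ) P - (Polynomial.aeval ((S : ℚ) : ℝ)) P|
      ≤ (H : ℝ) * ((d : ℝ) * ((d : ℝ) + 1) / 2) * |θ - ((S : ℚ) : ℝ)| := hpb
    _ ≤ (H : ℝ) * ((d : ℝ) * ((d : ℝ) + 1) / 2) * ((2 / 3) * (1 / (S.den : ℝ) ^ α)) := by
        apply mul_le_mul_of_nonneg_left habsd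
        positivity
    _ = ((H : ℝ) * d * (d + 1)) * (1 / (3 * (S.den : ℝ) ^ α)) := by
        rw [one_div, one_div, mul_inv]
        ring
    _ < ((H : ℝ) * d * (d + 1)) * (1 / (2 * (S.den : ℝ) ^ α)) := by
        apply mul_lt_mul_of_pos_left _ hHd
        apply one_div_lt_one_div_of_lt (by positivity) (by linarith)
    _ = (H : ℝ) * d * (d + 1) / (2 * (S.den : ℝ) ^ α) := by
        rw [one_div, ← div_eq_mul_inv]
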